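/- Let f : ℝ → ℝ be non-decreasing, right-continuous, and bounded on an interval [α', α + 1], and suppose liminf_{h→0⁺} (f(x+h)-f(x))/h ≥ p for all x ∈ [α', α]. Then f(α) - f(α') ≥ p(α - α'). -/

import Mathlib

noncomputable section
open Filter Set Topology

lemma key_lemma (f : ℝ → ℝ) (hmono : Monotone f) (α' α q : ℝ) (hq : 0 < q)
    (hle : α' ≤ α)
    (hd : ∀ x ∈ Set.Icc α' α,
      (q : EReal) < Filter.liminf
        (fun h : ℝ => (((f (x + h) - f x) / h : ℝ) : EReal)) (nhdsWithin 0 (Set.Ioi 0))) :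
    q * (α - α') ≤ f α - f α' := by
  set A : Set ℝ := {x | x ∈ Set.Icc α' α ∧ q * (x - α') ≤ f x - f α'} with hA
  have hA0 : α' ∈ A := ⟨⟨le_refl _, hle⟩, by simp⟩
  have hne : A.Nonempty := ⟨α', hA0⟩
  have hbdd : BddAbove A := ⟨α, fun x hx => hx.1.2⟩
  set c := sSup A with hc
  have hαc : α' ≤ c := le_csSup hbdd hA0
  have hcα : c ≤ α := csSup_le hne fun x hx => hx.1.2
  have hcA : c ∈ A := by
    refine ⟨⟨hαc, hcα⟩, ?_⟩
    have hkey : ∀ δ : ℝ, 0 < δ → q * (c - α') ≤ f c - f α' + q * δ := by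
      intro δ hδ
      obtain ⟨x, hxA, hx⟩ := exists_lt_of_lt_csSup hne (show c - δ < c by linarith)
      have hfx : f x ≤ f c := hmono (le_csSup hbdd hxA)
      have := hxA.2
      nlinarith
    by_contra hcon
    push_neg at hcon
    have hnum : 0 < q * (c - α') - (f c - f α') := by linarith
    have hδ : 0 < (q * (c - α') - (f c - f α')) / q / 2 :=
      div_pos (div_pos hnum hq) two_pos
    have := hkey _ hδ
    have hq' : q * ((q * (c - α') - (f c - f α')) / q / 2) =
        (q * (c - α') - (f c - f α')) / 2 := by
      field_simp
    rw [hq'] at this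
    linarith
  have hceq : c = α := by
    by_contra hne'
    have hlt : c < α := lt_of_le_of_ne hcα hne'
    have ev1 : ∀ᶠ h in nhdsWithin (0:ℝ) (Set.Ioi 0),
        (q : EReal) < (((f (c + h) - f c) / h : ℝ) : EReal) :=
      Filter.eventually_lt_of_lt_liminf (hd c hcA.1)
    have ev2 : Set.Ioo (0:ℝ) (α - c) ∈ nhdsWithin (0:ℝ) (Set.Ioi 0) :=
      Ioo_mem_nhdsGT_of_mem ⟨le_refl _, by linarith⟩
    obtain ⟨h, hh1, hh2⟩ := (ev1.and ev2).exists
    have hh0 : (0:ℝ) < h := hh2.1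
    have hhα : h < α - c := hh2.2
    have hslope : q < (f (c + h) - f c) / h := by exact_mod_cast hh1
    have hqh : q * h ≤ f (c + h) - f c := by
      have := (lt_div_iff₀ hh0).mp hslope
      linarith
    have hchA : c + h ∈ A := by
      refine ⟨⟨by linarith, by linarith⟩, ?_⟩
      have := hcA.2
      nlinarith
    have : c + h ≤ c := le_csSup hbdd hchA
    linarith
  have := hcA.2
  rw [hceq] at this
  linarith

theorem stmt1 (f : ℝ → ℝ) (hmono : Monotone f)
    (hrc : ∀ a : ℝ, ContinuousWithinAt f (Set.Ici a) a)
    (α' α p : ℝ) (hle : α' ≤ α)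
    (hbdd : BddAbove (f '' Set.Icc α' (α + 1)) ∧ BddBelow (f '' Set.Icc α' (α + 1)))
    (hd : ∀ x ∈ Set.Icc α' α,
      (p : EReal) ≤ Filter.liminf
        (fun h : ℝ => (((f (x + h) - f x) / h : ℝ) : EReal)) (nhdsWithin 0 (Set.Ioi 0))) :
    p * (α - α') ≤ f α - f α' := by
  have hf : f α' ≤ f α := hmono hle
  rcases le_or_gt p 0 with hp | hp
  · nlinarith
  · -- for every ε ∈ (0, p), (p - ε)(α - α') ≤ f α - f α'
    have hstep : ∀ ε : ℝ, 0 < ε → ε < p → (p - ε) * (α - α') ≤ f α - f α' := by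
      intro ε hε hεp
      refine key_lemma f hmono α' α (p - ε) (by linarith) hle ?_
      intro x hx
      refine lt_of_lt_of_le ?_ (hd x hx)
      exact_mod_cast (show (p - ε : ℝ) < p by linarith)
    refine le_of_forall_pos_le_add ?_
    intro δ hδ
    set ε := min (p / 2) (δ / (α - α' + 1)) with hε
    have hε0 : 0 < ε := lt_min (by linarith) (div_pos hδ (by linarith))
    have hεp : ε < p := lt_of_le_of_lt (min_le_left _ _) (by linarith)
    have h1 := hstep ε hε0 hεp
    have h2 : ε * (α - α') ≤ δ := by
      have h3 : ε ≤ δ / (α - α' + 1) := min_le_right _ _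
      have h4 : (0:ℝ) < α - α' + 1 := by linarith
      have h5 : ε * (α - α') ≤ (δ / (α - α' + 1)) * (α - α') := by
        apply mul_le_mul_of_nonneg_right h3 (by linarith)
      have h6 : (δ / (α - α' + 1)) * (α - α') ≤ δ := by
        rw [div_mul_eq_mul_div, div_le_iff₀ h4]
        nlinarith
      linarith
    nlinarith
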